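/- For every positive integer n, lspec(n) = {k : k odd, k divides n, k^2 < 2n} ∪ {2n/k : k odd, k divides n, k^2 > 2n}. Equivalently, every decomposition of n of odd length l satisfies that l divides n and l^2 < 2n, and every decomposition of n of even length l satisfies that k := 2n/l is an odd divisor of n with k^2 > 2n. -/
import Mathlib


/-- The length spectrum of `n`: the set of lengths `l` of decompositions of `n`,
i.e. sequences `a, a+1, ..., a+(l-1)` of `l ≥ 1` consecutive positive integers summing to `n`. -/
def lspec (n : ℕ) : Set ℕ :=
  {l | 0 < l ∧ ∃ a : ℕ, 0 < a ∧ ∑ i ∈ Finset.range l, (a + i) = n}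

/-- `A₀`: the even elements of `A`. -/
def evens (A : Set ℕ) : Set ℕ := {x ∈ A | Even x}

/-- `A₁`: the odd elements of `A`. -/
def odds (A : Set ℕ) : Set ℕ := {x ∈ A | Odd x}

/-- The spectral class of `n`: positive integers with the same length spectrum as `n`. -/
def specClass (n : ℕ) : Set ℕ := {m | 0 < m ∧ lspec m = lspec n}

/-- A set is balanced if it has equally many even and odd elements. -/
def balancedSet (S : Set ℕ) : Prop := (evens S).encard = (odds S).encard

/-- A set is unmixed if it has no even elements. -/
def unmixedSet (S : Set ℕ) : Prop := evens S = ∅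

/-- A set is lopsided if it is neither balanced nor unmixed. -/
def lopsidedSet (S : Set ℕ) : Prop := ¬ balancedSet S ∧ ¬ unmixedSet S

/-- The set of ratios `m'/m` over pairs of complementary factors `m ≤ m'` of `k`;
`q(k)` is the least element of this set. -/
def qSet (k : ℕ) : Set ℚ :=
  {r | ∃ m m' : ℕ, 0 < m ∧ m ≤ m' ∧ m * m' = k ∧ r = (m' : ℚ) / (m : ℚ)}

/-- The exceptional set `E(S)`: numbers `a = b·c` with `b, c ∈ S₁`, `a > max S₀`, and
whose set of divisors of `(max S₁)·a` strictly below `a` is exactly `S₁`. -/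
def excSet (S : Set ℕ) : Set ℕ :=
  {a | (∃ b ∈ odds S, ∃ c ∈ odds S, a = b * c) ∧ sSup (evens S) < a ∧
    {d | d ∣ sSup (odds S) * a ∧ d < a} = odds S}

/-- `P(S)`: the primes strictly greater than `max S₀`. -/
def primesAbove (S : Set ℕ) : Set ℕ := {p | p.Prime ∧ sSup (evens S) < p}

/-- A balanced spectrum is non-excessive if `S₁` is exactly the set of divisors of `max S₁`. -/
def nonExcessive (S : Set ℕ) : Prop := odds S = {d | d ∣ sSup (odds S)}

/-- `γ_p`: the largest `k` with `p^k ∈ S₁`. -/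
noncomputable def gammaIdx (S : Set ℕ) (p : ℕ) : ℕ := sSup {k | p ^ k ∈ odds S}

/-- `μ_p = v_p(max S₁)`. -/
noncomputable def muIdx (S : Set ℕ) (p : ℕ) : ℕ := (sSup (odds S)).factorization p

/-- The excessive index `ε_p = γ_p − μ_p` of a prime `p` with respect to `S`. -/
noncomputable def excIdx (S : Set ℕ) (p : ℕ) : ℕ := gammaIdx S p - muIdx S p

/-- The difference set `D(S)`: `S₁` with its `|S₀|` smallest elements removed when
`|S₀| ≤ |S₁|`, and empty otherwise.  An element `x` of `S₁` survives exactly when at least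
`|S₀|` elements of `S₁` lie strictly below it. -/
def diffSet (S : Set ℕ) : Set ℕ :=
  {x ∈ odds S | (evens S).encard ≤ {y ∈ odds S | y < x}.encard}
lemma two_mul_sum_key (l a : ℕ) :
    2 * (∑ i ∈ Finset.range l, (a + i)) + l = l * (2 * a + l) := by
  rw [Finset.sum_add_distrib, Finset.sum_const, Finset.card_range, smul_eq_mul]
  cases l with
  | zero => simp
  | succ m =>
    have h := Finset.sum_range_id_mul_two (m + 1)
    simp only [Nat.add_sub_cancel] at h
    nlinarith [h]

/-- The length spectrum of `n` consists of the odd divisors `k` of `n` with `k² < 2n`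
together with the numbers `2n/k` for odd divisors `k` of `n` with `k² > 2n`. -/
theorem lspec_eq (n : ℕ) (hn : 0 < n) :
    lspec n = {k | Odd k ∧ k ∣ n ∧ k ^ 2 < 2 * n} ∪
      {l | ∃ k : ℕ, Odd k ∧ k ∣ n ∧ 2 * n < k ^ 2 ∧ l = 2 * n / k} := by
  ext x
  simp only [lspec, Set.mem_setOf_eq, Set.mem_union]
  constructor
  · rintro ⟨hl, a, ha, hsum⟩
    have hkey := two_mul_sum_key x a
    rw [hsum] at hkey
    -- hkey : 2 * n + x = x * (2 * a + x)
    set m := 2 * a - 1 + x with hmdef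
    have hm : x * m = 2 * n := by
      have he : 2 * a + x = m + 1 := by omega
      rw [he, Nat.mul_succ] at hkey
      omega
    have hxm : x < m := by omega
    rcases Nat.even_or_odd x with hx | hx
    · -- x even, put k := m
      right
      obtain ⟨b, hb⟩ := hx
      have hmodd : Odd m := ⟨a + b - 1, by omega⟩
      have hdvd2 : m ∣ 2 * n := Dvd.intro_left x hm
      have hcop : Nat.Coprime m 2 := hmodd.coprime_two_right
      have hdvd : m ∣ n := hcop.dvd_of_dvd_mul_left (by rwa [mul_comm] at hdvd2 ⊢)
      have hlt : 2 * n < m ^ 2 := by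
        have : x * m < m * m := Nat.mul_lt_mul_of_lt_of_le hxm (le_refl m) (by omega : 0 < m)
        rw [hm] at this; nlinarith [this]
      refine ⟨m, hmodd, hdvd, hlt, ?_⟩
      rw [← hm, Nat.mul_div_cancel x (by omega : 0 < m)]
    · -- x odd
      left
      have hdvd2 : x ∣ 2 * n := Dvd.intro m hm
      have hcop : Nat.Coprime x 2 := hx.coprime_two_right
      have hdvd : x ∣ n := hcop.dvd_of_dvd_mul_left (by rwa [mul_comm] at hdvd2 ⊢)
      refine ⟨hx, hdvd, ?_⟩
      have : x * x < x * m := Nat.mul_lt_mul_of_le_of_lt (le_refl x) hxm hl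
      rw [hm] at this; nlinarith [this]
  · rintro (⟨hodd, hdvd, hlt⟩ | ⟨k, hodd, hdvd, hlt, hx⟩)
    · obtain ⟨t, ht⟩ := hdvd
      obtain ⟨j, hj⟩ := hodd
      have ht0 : 0 < t := by
        rcases Nat.eq_zero_or_pos t with h | h
        · subst h; omega
        · exact h
      have hjt : j < t := by
        have h1 : (2 * j + 1) ^ 2 < 2 * ((2 * j + 1) * t) := by
          rw [← hj, ← ht]; exact hlt
        nlinarith [h1]
      refine ⟨by omega, t - j, by omega, ?_⟩
      have hkey := two_mul_sum_key x (t - j)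
      have e1 : 2 * (t - j) + x = 2 * t + 1 := by omega
      rw [e1] at hkey
      have e2 : x * (2 * t + 1) = 2 * n + x := by rw [ht, hj]; ring
      rw [e2] at hkey
      omega
    · obtain ⟨t, ht⟩ := hdvd
      obtain ⟨j, hj⟩ := hodd
      have ht0 : 0 < t := by
        rcases Nat.eq_zero_or_pos t with h | h
        · subst h; omega
        · exact h
      have htj : t ≤ j := by
        have h1 : 2 * ((2 * j + 1) * t) < (2 * j + 1) ^ 2 := by
          rw [← hj, ← ht]; exact hlt
        nlinarith [h1]
      have hx2 : x = 2 * t := by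
        rw [hx, ht]
        rw [show 2 * (k * t) = 2 * t * k by ring, Nat.mul_div_cancel _ (by omega : 0 < k)]
      refine ⟨by omega, j + 1 - t, by omega, ?_⟩
      have hkey := two_mul_sum_key x (j + 1 - t)
      have e1 : 2 * (j + 1 - t) + x = 2 * j + 2 := by omega
      rw [e1] at hkey
      have e2 : x * (2 * j + 2) = 2 * n + x := by
        rw [hx2, ht, hj]; ring
      rw [e2] at hkey
      omega
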